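/- For any a ≥ 0 and d ≥ 0, the shifted FI-module S_{+a}M(d) over a commutative ring R decomposes as a direct sum S_{+a}M(d) ≅ M(d) ⊕ Q_a, where Q_a is a free FI-module finitely generated in degree ≤ d − 1; explicitly, S_{+a}M(d) ≅ ⊕_{T ⊆ [d]} M(d − |T|) ⊗_R R[Inj(T, [-a])], with the summand for T = ∅ canonically identified with M(d). -/

import Mathlib

open CategoryTheory

/-- The category FI: objects are finite sets, morphisms are injections. -/
structure FI : Type 1 where
  carrier : Type
  [fintype : Fintype carrier]
  [decEq : DecidableEq carrier]

namespace FI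

instance : CoeSort FI Type := ⟨FI.carrier⟩
attribute [instance] FI.fintype FI.decEq

/-- Build an object of `FI` from a finite type. -/
def of (X : Type) [Fintype X] [DecidableEq X] : FI := ⟨X⟩

instance : Category FI where
  Hom S T := {f : S.carrier → T.carrier // Function.Injective f}
  id S := ⟨id, fun _ _ h => h⟩
  comp f g := ⟨g.1 ∘ f.1, fun _ _ h => f.2 (g.2 h)⟩
  id_comp _ := rfl
  comp_id _ := rfl
  assoc _ _ _ := rfl

/-- The standard object `[n] = {1, …, n}` of `FI`. -/
def obj' (n : ℕ) : FI := FI.of (Fin n)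

end FI

variable {R : Type} [CommRing R]

/-- A sub-FI-module of an FI-module `V` : a collection of submodules compatible
with all the induced maps. -/
structure SubFIModule (V : FI ⥤ ModuleCat R) where
  carrier : ∀ S : FI, Submodule R (V.obj S)
  map_mem : ∀ {S T : FI} (f : S ⟶ T) (v : V.obj S), v ∈ carrier S → V.map f v ∈ carrier T

/-- An FI-module is finitely generated if finitely many elements are contained in
no proper sub-FI-module. -/
def FIModuleFG (V : FI ⥤ ModuleCat R) : Prop :=
  ∃ (k : ℕ) (n : Fin k → ℕ) (v : ∀ i, V.obj (FI.obj' (n i))),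
    ∀ W : SubFIModule V, (∀ i, v i ∈ W.carrier (FI.obj' (n i))) → ∀ S, W.carrier S = ⊤

/-- An FI-module is generated in degree ≤ d if some set of elements of degrees ≤ d
is contained in no proper sub-FI-module. -/
def FIModuleGenLE (V : FI ⥤ ModuleCat R) (d : ℕ) : Prop :=
  ∃ (ι : Type) (n : ι → ℕ) (_ : ∀ i, n i ≤ d) (v : ∀ i, V.obj (FI.obj' (n i))),
    ∀ W : SubFIModule V, (∀ i, v i ∈ W.carrier (FI.obj' (n i))) → ∀ S, W.carrier S = ⊤

/-- The free FI-module `⊕_{i ∈ ι} M(d_i)` over `R`: it assigns to a finite set `S` the free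
`R`-module on the disjoint union over `i ∈ ι` of the sets of injections `[d_i] ↪ S`, with
maps induced by postcomposition. Taking `ι` a one-element set gives the FI-module
`M(d) = R[Hom_FI([d], −)]`. -/
noncomputable def FreeFIModule (R : Type) [CommRing R] (ι : Type) (ds : ι → ℕ) :
    FI ⥤ ModuleCat R where
  obj S := ModuleCat.of R ((Σ i : ι, (FI.obj' (ds i) ⟶ S)) →₀ R)
  map {S T} g := ModuleCat.ofHom (Finsupp.lmapDomain R R (fun p => ⟨p.1, p.2 ≫ g⟩))
  map_id := by
    intro S
    apply ModuleCat.hom_ext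
    exact Finsupp.lmapDomain_id R R
  map_comp := by
    intro S T U f g
    apply ModuleCat.hom_ext
    exact Finsupp.lmapDomain_comp R R
      (fun p : Σ i : ι, (FI.obj' (ds i) ⟶ S) => (⟨p.1, p.2 ≫ f⟩ : Σ i : ι, (FI.obj' (ds i) ⟶ T)))
      (fun p : Σ i : ι, (FI.obj' (ds i) ⟶ T) => (⟨p.1, p.2 ≫ g⟩ : Σ i : ι, (FI.obj' (ds i) ⟶ U)))

/-- The endofunctor `Ξ_a : FI → FI`, `S ↦ S ⊔ [-a]` (disjoint union with a fixed
`a`-element set). Precomposition with it is the positive shift functor `S_{+a}` on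
FI-modules: `(S_{+a}V) = Ξ_a ⋙ V`. -/
def shiftFI (a : ℕ) : FI ⥤ FI where
  obj S := FI.of (S.carrier ⊕ Fin a)
  map f := ⟨Sum.map f.1 id, f.2.sumMap (fun _ _ h => h)⟩
  map_id := by
    intro S
    apply Subtype.ext
    funext x
    cases x <;> rfl
  map_comp := by
    intro S T U f g
    apply Subtype.ext
    funext x
    cases x <;> rfl

/-- The FI-module `M(d) = R[Hom_FI([d], −)]`. -/
noncomputable def MFI (R : Type) [CommRing R] (d : ℕ) : FI ⥤ ModuleCat R :=
  FreeFIModule R PUnit (fun _ => d)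

/-! ### Auxiliary constructions for the proof -/

namespace ShiftDecomp


variable (a d : ℕ) (S : FI)

/-- The index type `⊔_{T ⊆ [d]} Inj(T, [-a])`. -/
abbrev Idx (a d : ℕ) : Type := Σ T : Finset (Fin d), ({x // x ∈ T} ↪ Fin a)

lemma card_compl_eq (T : Finset (Fin d)) : Tᶜ.card = d - T.card := by
  simp [Finset.card_compl]

/-- The order isomorphism `Fin (d - |T|) ≃ Tᶜ`. -/
def oIso (T : Finset (Fin d)) : Fin (d - T.card) ≃o {x // x ∈ Tᶜ} :=
  Tᶜ.orderIsoOfFin (card_compl_eq d T)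

lemma sum_inl_getLeft {α β : Type} (z : α ⊕ β) (h : z.isLeft) :
    Sum.inl (z.getLeft h) = z := Sum.inl_getLeft z h

/-- From `(T, g, h)` build the injection `[d] → S ⊔ [a]`. -/
def bwdFun (p : Σ q : Idx a d, (FI.obj' (d - q.1.card) ⟶ S)) :
    FI.obj' d ⟶ (shiftFI a).obj S :=
  ⟨fun (x : Fin d) => (if hx : x ∈ p.1.1 then Sum.inr (p.1.2 ⟨x, hx⟩)
      else Sum.inl (p.2.1 ((oIso d p.1.1).symm ⟨x, Finset.mem_compl.mpr hx⟩)) : S.carrier ⊕ Fin a), by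
    intro (x : Fin d) (y : Fin d) hxy
    by_cases hx : x ∈ p.1.1 <;> by_cases hy : y ∈ p.1.1 <;> simp [hx, hy] at hxy
    · exact congrArg Subtype.val (p.1.2.injective (Sum.inr.inj hxy))
    · have h1 := p.2.2 (Sum.inl.inj hxy)
      have h2 := (oIso d p.1.1).symm.injective h1
      exact congrArg Subtype.val h2⟩

lemma bwdFun_isRight (p : Σ q : Idx a d, (FI.obj' (d - q.1.card) ⟶ S)) (x : Fin d) :
    ((bwdFun a d S p).1 x).isRight ↔ x ∈ p.1.1 := by
  by_cases hx : x ∈ p.1.1 <;> simp [bwdFun, hx]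

/-- `bwdFun`, wrapped as a map into the `PUnit`-indexed sigma type. -/
def invE (p : Σ q : Idx a d, (FI.obj' (d - q.1.card) ⟶ S)) :
    Σ _ : PUnit, (FI.obj' d ⟶ (shiftFI a).obj S) :=
  ⟨⟨⟩, bwdFun a d S p⟩

/-- The set of elements of `[d]` sent into `[a]`. -/
def Tof (f : FI.obj' d ⟶ (shiftFI a).obj S) : Finset (Fin d) :=
  Finset.univ.filter fun x => (f.1 x).isRight

lemma mem_Tof (f : FI.obj' d ⟶ (shiftFI a).obj S) (x : Fin d) :
    x ∈ Tof a d S f ↔ (f.1 x).isRight := by simp [Tof]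

lemma isLeft_of_compl (f : FI.obj' d ⟶ (shiftFI a).obj S) (x : Fin d)
    (hx : x ∈ (Tof a d S f)ᶜ) : (f.1 x).isLeft := by
  rw [Finset.mem_compl, mem_Tof] at hx
  exact Sum.not_isRight.mp hx

/-- The embedding `T ↪ [a]` extracted from `f`. -/
def fwdEmb (f : FI.obj' d ⟶ (shiftFI a).obj S) : {x // x ∈ Tof a d S f} ↪ Fin a :=
  ⟨fun x => (f.1 x.1).getRight ((mem_Tof a d S f x.1).mp x.2), by
    intro x y hxy
    apply Subtype.ext
    apply f.2
    rw [← Sum.inr_getRight (f.1 x.1) ((mem_Tof a d S f x.1).mp x.2),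
      ← Sum.inr_getRight (f.1 y.1) ((mem_Tof a d S f y.1).mp y.2)]
    exact congrArg Sum.inr hxy⟩

/-- The injection `[d - |T|] → S` extracted from `f`. -/
def fwdHom (f : FI.obj' d ⟶ (shiftFI a).obj S) :
    FI.obj' (d - (Tof a d S f).card) ⟶ S :=
  ⟨fun j => (f.1 ((oIso d (Tof a d S f)) j).1).getLeft
      (isLeft_of_compl a d S f _ ((oIso d (Tof a d S f)) j).2), by
    intro j k hjk
    have h1 : f.1 ((oIso d (Tof a d S f)) j).1 = f.1 ((oIso d (Tof a d S f)) k).1 := by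
      rw [← sum_inl_getLeft _ (isLeft_of_compl a d S f _ ((oIso d (Tof a d S f)) j).2),
        ← sum_inl_getLeft _ (isLeft_of_compl a d S f _ ((oIso d (Tof a d S f)) k).2)]
      exact congrArg Sum.inl hjk
    have h2 := f.2 h1
    exact (oIso d (Tof a d S f)).injective (Subtype.ext h2)⟩

/-- Decompose an injection `[d] → S ⊔ [a]` into `(T, g, h)`. -/
def fwd (f : FI.obj' d ⟶ (shiftFI a).obj S) :
    Σ q : Idx a d, (FI.obj' (d - q.1.card) ⟶ S) :=
  ⟨(⟨Tof a d S f, fwdEmb a d S f⟩ : Idx a d), fwdHom a d S f⟩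

lemma invE_fwd (f : FI.obj' d ⟶ (shiftFI a).obj S) :
    invE a d S (fwd a d S f) = ⟨⟨⟩, f⟩ := by
  refine congrArg (fun t : FI.obj' d ⟶ (shiftFI a).obj S =>
    (⟨⟨⟩, t⟩ : Σ _ : PUnit, (FI.obj' d ⟶ (shiftFI a).obj S))) ?_
  apply Subtype.ext
  refine funext fun (x : Fin d) => ?_
  by_cases hx : x ∈ Tof a d S f
  · simp only [invE, bwdFun]
    rw [dif_pos (show x ∈ (fwd a d S f).1.1 from hx)]
    exact Sum.inr_getRight _ _
  · simp only [invE, bwdFun]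
    rw [dif_neg (show x ∉ (fwd a d S f).1.1 from hx)]
    set j := (oIso d (Tof a d S f)).symm ⟨x, Finset.mem_compl.mpr hx⟩ with hj
    have hox : ((oIso d (Tof a d S f)) j).1 = x := by
      rw [hj, OrderIso.apply_symm_apply]
    show Sum.inl ((f.1 ((oIso d (Tof a d S f)) j).1).getLeft
      (isLeft_of_compl a d S f _ ((oIso d (Tof a d S f)) j).2)) = f.1 x
    rw [sum_inl_getLeft _ (isLeft_of_compl a d S f _ ((oIso d (Tof a d S f)) j).2), hox]

lemma invE_bijective : Function.Bijective (invE a d S) := by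
  constructor
  · intro p q h
    have hf : bwdFun a d S p = bwdFun a d S q :=
      congrArg (fun s : Σ _ : PUnit, (FI.obj' d ⟶ (shiftFI a).obj S) => s.2) h
    have hfun : (bwdFun a d S p).1 = (bwdFun a d S q).1 := congrArg Subtype.val hf
    obtain ⟨⟨T₁, g₁⟩, h₁⟩ := p
    obtain ⟨⟨T₂, g₂⟩, h₂⟩ := q
    have hT : T₁ = T₂ := by
      ext x
      rw [← bwdFun_isRight a d S ⟨⟨T₁, g₁⟩, h₁⟩ x, ← bwdFun_isRight a d S ⟨⟨T₂, g₂⟩, h₂⟩ x, hfun]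
    subst hT
    have hg : g₁ = g₂ := by
      ext x
      have hx := congrFun hfun x.1
      simp only [bwdFun, x.2, dif_pos] at hx
      exact congrArg _ (Sum.inr.inj hx)
    subst hg
    have hh : h₁ = h₂ := by
      apply Subtype.ext
      refine funext fun (j : Fin (d - T₁.card)) => ?_
      have hmem : ((oIso d T₁) j).1 ∉ T₁ := Finset.mem_compl.mp ((oIso d T₁) j).2
      have hx := congrFun hfun ((oIso d T₁) j).1
      simp only [bwdFun, hmem, dif_neg, not_false_iff] at hx
      have hsub : ((oIso d T₁).symm ⟨((oIso d T₁) j).1, Finset.mem_compl.mpr hmem⟩) = j := by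
        have : (⟨((oIso d T₁) j).1, Finset.mem_compl.mpr hmem⟩ :
            {x // x ∈ T₁ᶜ}) = (oIso d T₁) j := rfl
        rw [this, OrderIso.symm_apply_apply]
      rw [hsub] at hx
      exact Sum.inl.inj hx
    rw [hh]
  · rintro ⟨⟨⟩, f⟩
    exact ⟨fwd a d S f, invE_fwd a d S f⟩

/-- The key equivalence of index sets. -/
noncomputable def E : (Σ _ : PUnit, (FI.obj' d ⟶ (shiftFI a).obj S)) ≃
    (Σ q : Idx a d, (FI.obj' (d - q.1.card) ⟶ S)) :=
  (Equiv.ofBijective (invE a d S) (invE_bijective a d S)).symm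

lemma bwd_nat {S S' : FI} (g : S ⟶ S') (p : Σ q : Idx a d, (FI.obj' (d - q.1.card) ⟶ S)) :
    bwdFun a d S p ≫ (shiftFI a).map g =
      bwdFun a d S' ⟨p.1, p.2 ≫ g⟩ := by
  apply Subtype.ext
  refine funext fun (x : Fin d) => ?_
  show Sum.map g.1 id ((bwdFun a d S p).1 x) = _
  by_cases hx : x ∈ p.1.1 <;> simp [bwdFun, hx] <;> rfl

lemma E_nat {S S' : FI} (g : S ⟶ S')
    (x : Σ _ : PUnit, (FI.obj' d ⟶ (shiftFI a).obj S)) :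
    E a d S' ⟨x.1, x.2 ≫ (shiftFI a).map g⟩ =
      ⟨(E a d S x).1, (E a d S x).2 ≫ g⟩ := by
  obtain ⟨u, f⟩ := x
  cases u
  set p := E a d S ⟨⟨⟩, f⟩ with hp
  have hx : invE a d S p = ⟨⟨⟩, f⟩ := (E a d S).symm_apply_apply ⟨⟨⟩, f⟩
  have hf : bwdFun a d S p = f :=
    congrArg (fun s : Σ _ : PUnit, (FI.obj' d ⟶ (shiftFI a).obj S) => s.2) hx
  have key : invE a d S' ⟨p.1, p.2 ≫ g⟩ = ⟨⟨⟩, f ≫ (shiftFI a).map g⟩ := by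
    show (⟨⟨⟩, bwdFun a d S' ⟨p.1, p.2 ≫ g⟩⟩ : Σ _ : PUnit, _) = _
    rw [← bwd_nat, hf]
  show E a d S' ⟨⟨⟩, f ≫ (shiftFI a).map g⟩ = ⟨p.1, p.2 ≫ g⟩
  rw [← key]
  exact (E a d S').apply_symm_apply _

/-- Build a natural isomorphism of free-type FI-modules from a natural family of
equivalences of index sets. -/
noncomputable def freeNatIso (R : Type) [CommRing R] (G : FI ⥤ FI) {ι κ : Type}
    (ds : ι → ℕ) (es : κ → ℕ)
    (e : ∀ S : FI, (Σ i : ι, (FI.obj' (ds i) ⟶ G.obj S)) ≃ (Σ j : κ, (FI.obj' (es j) ⟶ S)))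
    (he : ∀ {S S' : FI} (g : S ⟶ S') (x : Σ i : ι, (FI.obj' (ds i) ⟶ G.obj S)),
      e S' ⟨x.1, x.2 ≫ G.map g⟩ = ⟨(e S x).1, (e S x).2 ≫ g⟩) :
    (G ⋙ FreeFIModule R ι ds) ≅ FreeFIModule R κ es :=
  NatIso.ofComponents (fun S => (Finsupp.domLCongr (e S) :
      ((Σ i : ι, (FI.obj' (ds i) ⟶ G.obj S)) →₀ R) ≃ₗ[R] _).toModuleIso) (by
    intro S S' g
    apply ModuleCat.hom_ext
    refine Finsupp.lhom_ext fun x r => ?_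
    show (Finsupp.domLCongr (e S') : _ ≃ₗ[R] _)
        (Finsupp.lmapDomain R R (fun p : Σ i : ι, (FI.obj' (ds i) ⟶ G.obj S) =>
          (⟨p.1, p.2 ≫ G.map g⟩ : Σ i : ι, (FI.obj' (ds i) ⟶ G.obj S')))
          (Finsupp.single x r)) =
      Finsupp.lmapDomain R R (fun p : Σ j : κ, (FI.obj' (es j) ⟶ S) =>
          (⟨p.1, p.2 ≫ g⟩ : Σ j : κ, (FI.obj' (es j) ⟶ S')))
        ((Finsupp.domLCongr (e S) : _ ≃ₗ[R] _) (Finsupp.single x r))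
    rw [Finsupp.lmapDomain_apply, Finsupp.mapDomain_single, Finsupp.domLCongr_single,
      Finsupp.domLCongr_single, Finsupp.lmapDomain_apply, Finsupp.mapDomain_single, he])

/-- The subtype of `Idx a d` where `T` is nonempty. -/
abbrev Idx' (a d : ℕ) : Type := {q : Idx a d // q.1.Nonempty}

instance : Finite (Idx' a d) := Subtype.finite

/-- The unique embedding of the empty subset. -/
def embEmpty : ({x // x ∈ (∅ : Finset (Fin d))} ↪ Fin a) :=
  ⟨fun x => absurd x.2 (Finset.notMem_empty _), fun x => absurd x.2 (Finset.notMem_empty _)⟩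

/-- Reindexing map from the `Option`-indexed family to `Idx`. -/
def sigOpt (S : FI) :
    (Σ o : Option (Idx' a d),
      (FI.obj' (Option.elim o d (fun p => d - p.1.1.card)) ⟶ S)) →
    (Σ q : Idx a d, (FI.obj' (d - q.1.card) ⟶ S))
  | ⟨none, f⟩ => ⟨⟨∅, embEmpty a d⟩, f⟩
  | ⟨some p, f⟩ => ⟨p.1, f⟩

lemma sigOpt_bijective (S : FI) : Function.Bijective (sigOpt a d S) := by
  constructor
  · rintro ⟨o₁, f₁⟩ ⟨o₂, f₂⟩ h
    match o₁, o₂ with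
    | none, none =>
      have h2 := eq_of_heq (Sigma.mk.inj_iff.mp h).2
      rw [h2]
    | none, some p =>
      have h1 : (⟨∅, embEmpty a d⟩ : Idx a d) = p.1 := congrArg Sigma.fst h
      have h1' : (∅ : Finset (Fin d)) = p.1.1 := congrArg Sigma.fst h1
      obtain ⟨x, hx⟩ := p.2
      exact absurd (h1' ▸ hx) (Finset.notMem_empty x)
    | some p, none =>
      have h1 : p.1 = (⟨∅, embEmpty a d⟩ : Idx a d) := congrArg Sigma.fst h
      have h1' : p.1.1 = (∅ : Finset (Fin d)) := congrArg Sigma.fst h1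
      obtain ⟨x, hx⟩ := p.2
      exact absurd (h1' ▸ hx) (Finset.notMem_empty x)
    | some p, some q =>
      have h1 : p.1 = q.1 := congrArg Sigma.fst h
      have hpq : p = q := Subtype.ext h1
      subst hpq
      have h2 := eq_of_heq (Sigma.mk.inj_iff.mp h).2
      rw [h2]
  · rintro ⟨⟨T, gE⟩, h⟩
    by_cases hT : T.Nonempty
    · exact ⟨⟨some ⟨⟨T, gE⟩, hT⟩, h⟩, rfl⟩
    · rw [Finset.not_nonempty_iff_eq_empty] at hT
      subst hT
      have hg : gE = embEmpty a d := by
        ext x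
        exact absurd x.2 (Finset.notMem_empty _)
      subst hg
      exact ⟨⟨none, h⟩, rfl⟩

/-- The reindexing equivalence. -/
noncomputable def sigOptEquiv (S : FI) :
    (Σ o : Option (Idx' a d),
      (FI.obj' (Option.elim o d (fun p => d - p.1.1.card)) ⟶ (𝟭 FI).obj S)) ≃
    (Σ q : Idx a d, (FI.obj' (d - q.1.card) ⟶ S)) :=
  Equiv.ofBijective (sigOpt a d S) (sigOpt_bijective a d S)

lemma sigOptEquiv_nat {S S' : FI} (g : S ⟶ S')
    (x : Σ o : Option (Idx' a d),
      (FI.obj' (Option.elim o d (fun p => d - p.1.1.card)) ⟶ (𝟭 FI).obj S)) :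
    sigOptEquiv a d S' ⟨x.1, x.2 ≫ (𝟭 FI).map g⟩ =
      ⟨(sigOptEquiv a d S x).1, (sigOptEquiv a d S x).2 ≫ g⟩ := by
  obtain ⟨o, f⟩ := x
  cases o <;> rfl

end ShiftDecomp

/-- **Decomposition of shifts of free FI-modules** (Church–Ellenberg–Farb–Nagpal,
Proposition 2.12). For `a, d ≥ 0`, the shifted FI-module `S_{+a}M(d)` decomposes as
`M(d) ⊕ Q_a` where `Q_a` is a free FI-module finitely generated in degree ≤ d − 1;
explicitly, `S_{+a}M(d) ≅ ⊕_{T ⊆ [d]} M(d − |T|) ⊗_R R[Inj(T, [-a])]` (the summand for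
`T = ∅` being `M(d)`). -/
theorem shift_of_free_FIModule_decomposition
    (R : Type) [CommRing R] (a d : ℕ) :
    (∃ (ι' : Type) (_ : Finite ι') (ds' : ι' → ℕ), (∀ i, ds' i < d) ∧
      Nonempty ((shiftFI a ⋙ MFI R d) ≅
        FreeFIModule R (Option ι') (fun o => o.elim d ds'))) ∧
    Nonempty ((shiftFI a ⋙ MFI R d) ≅
      FreeFIModule R (Σ T : Finset (Fin d), ({x // x ∈ T} ↪ Fin a))
        (fun p => d - p.1.card)) := by
  open ShiftDecomp in
  constructor
  · refine ⟨Idx' a d, inferInstance, fun p => d - p.1.1.card, fun i => ?_, ⟨?_⟩⟩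
    · obtain ⟨x, hx⟩ := i.2
      exact Nat.sub_lt x.pos (Finset.card_pos.mpr i.2)
    · exact (freeNatIso R (shiftFI a) _ _ (E a d) (fun g x => E_nat a d g x)) ≪≫
        (freeNatIso R (𝟭 FI) _ _ (sigOptEquiv a d)
          (fun g x => sigOptEquiv_nat a d g x)).symm ≪≫
        Functor.leftUnitor _
  · exact ⟨freeNatIso R (shiftFI a) _ _ (E a d) (fun g x => E_nat a d g x)⟩
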